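/- Symmetrization of the Coulomb branch (Bethe Ansatz) equations: for integers n ≥ k ≥ 1, the following identity holds in the polynomial ring ℤ[q, z_1,…,z_k, ζ_1,…,ζ_n]: (Π_{i=1}^{n} (z_1 − ζ_i)) · (Π_{b=2}^{k} (1 − z_b)) + (-1)^k q (1 − z_1)^{k−1} Π_{i=1}^{n} (1 − ζ_i) = z_1^n + Σ_{i=0}^{n−1} (-1)^{n−i} z_1^{i} ĝ_{n−i}(z,ζ,q), where ĝ_ℓ(z,ζ,q) := c'_{≥ℓ}(z,ζ) for 1 ≤ ℓ ≤ n−k, and ĝ_ℓ(z,ζ,q) := c'_{≥ℓ}(z,ζ) + (E·C^ζ_{≥n-k+2})_{ℓ−n+k} + (-1)^{n+k} q · binom(k−1, n−ℓ) · c^ζ for n−k+1 ≤ ℓ ≤ n. In particular each ĝ_ℓ is a symmetric polynomial in z_1,…,z_k and in ζ_1,…,ζ_n. -/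

import Mathlib

open Finset MvPolynomial

noncomputable section

namespace CoulombAux

set_option linter.unusedSectionVars false

variable {R : Type*} [CommRing R] {ι : Type*} [DecidableEq ι]

lemma neg_one_pow_congr {a b : ℕ} (h : a % 2 = b % 2) : ((-1 : R)) ^ a = (-1) ^ b := by
  conv_lhs => rw [← Nat.div_add_mod a 2]
  conv_rhs => rw [← Nat.div_add_mod b 2]
  rw [pow_add, pow_add, pow_mul, pow_mul, neg_one_sq, one_pow, one_pow, h]

lemma neg_one_cancel (r : ℕ) (y : R) : (-1 : R) ^ r * ((-1) ^ r * y) = y := by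
  rw [← mul_assoc, ← mul_pow]
  simp


lemma sum_Icc_shift {M : Type*} [AddCommMonoid M] (f : ℕ → M) (m b : ℕ) (hb : 1 ≤ b) :
    ∑ i ∈ Finset.Icc (m + 1) b, f i = ∑ j ∈ Finset.Icc m (b - 1), f (j + 1) := by
  refine Finset.sum_nbij' (fun i => i - 1) (fun j => j + 1) ?_ ?_ ?_ ?_ ?_
  · intro i hi; simp only [Finset.mem_Icc] at *; omega
  · intro j hj; simp only [Finset.mem_Icc] at *; omega
  · intro i hi; simp only [Finset.mem_Icc] at hi; omega
  · intro j hj; simp only [Finset.mem_Icc] at hj; omega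
  · intro i hi
    simp only [Finset.mem_Icc] at hi
    congr 1
    omega

lemma sum_Icc_drop_top {M : Type*} [AddCommMonoid M] (f : ℕ → M) (a b : ℕ) (hb : f b = 0) :
    ∑ i ∈ Finset.Icc a b, f i = ∑ i ∈ Finset.Ico a b, f i := by
  refine (Finset.sum_subset Finset.Ico_subset_Icc_self fun x hx hnx => ?_).symm
  have h1 := Finset.mem_Icc.mp hx
  have h2 : ¬(a ≤ x ∧ x < b) := fun h => hnx (Finset.mem_Ico.mpr h)
  have : x = b := by omega
  rw [this, hb]

def ES (s : Finset ι) (f : ι → R) (r : ℕ) : R := ∑ t ∈ s.powersetCard r, ∏ j ∈ t, f j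

@[simp] lemma ES_zero (s : Finset ι) (f : ι → R) : ES s f 0 = 1 := by
  simp [ES]

lemma ES_of_card_lt {s : Finset ι} (f : ι → R) {r : ℕ} (h : s.card < r) : ES s f r = 0 := by
  simp [ES, Finset.powersetCard_eq_empty.mpr h]

lemma ES_insert {a : ι} {s : Finset ι} (h : a ∉ s) (f : ι → R) (r : ℕ) :
    ES (insert a s) f (r + 1) = ES s f (r + 1) + f a * ES s f r := by
  rw [ES, Finset.powersetCard_succ_insert h, Finset.sum_union]
  · rw [Finset.sum_image]
    · rw [ES, ES, Finset.mul_sum]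
      congr 1
      refine Finset.sum_congr rfl fun t ht => ?_
      have hat : a ∉ t := fun hat => h ((Finset.mem_powersetCard.mp ht).1 hat)
      rw [Finset.prod_insert hat]
    · intro t ht u hu htu
      have hat : a ∉ t := fun hat => h ((Finset.mem_powersetCard.mp ht).1 hat)
      have hau : a ∉ u := fun hau => h ((Finset.mem_powersetCard.mp hu).1 hau)
      have := congrArg (fun v => Finset.erase v a) htu
      simpa [Finset.erase_insert hat, Finset.erase_insert hau] using this
  · refine Finset.disjoint_left.mpr fun t ht ht' => ?_
    obtain ⟨u, hu, rfl⟩ := Finset.mem_image.mp ht'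
    have : a ∈ s := (Finset.mem_powersetCard.mp ht).1 (Finset.mem_insert_self a u)
    exact h this

lemma prod_sub_eq_sum (s : Finset ι) (f : ι → R) (x : R) :
    ∏ i ∈ s, (x - f i)
      = ∑ r ∈ Finset.range (s.card + 1), (-1) ^ r * ES s f r * x ^ (s.card - r) := by
  classical
  induction s using Finset.induction_on with
  | empty => simp
  | insert a s h ih =>
    rw [Finset.prod_insert h, ih, Finset.card_insert_of_notMem h]
    rw [Finset.sum_range_succ' (fun r => (-1) ^ r * ES (insert a s) f r * x ^ (s.card + 1 - r))]
    have hg0 : (-1 : R) ^ 0 * ES (insert a s) f 0 * x ^ (s.card + 1 - 0) = x ^ (s.card + 1) := by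
      simp
    rw [hg0]
    have hstep : ∀ i ∈ Finset.range (s.card + 1),
        (-1 : R) ^ (i + 1) * ES (insert a s) f (i + 1) * x ^ (s.card + 1 - (i + 1))
          = (-1) ^ (i + 1) * ES s f (i + 1) * x ^ (s.card - i)
            + (-(f a)) * ((-1) ^ i * ES s f i * x ^ (s.card - i)) := by
      intro i hi
      rw [ES_insert h]
      have : s.card + 1 - (i + 1) = s.card - i := by omega
      rw [this]
      ring
    rw [Finset.sum_congr rfl hstep, Finset.sum_add_distrib, ← Finset.mul_sum]
    have hfirst : ∑ i ∈ Finset.range (s.card + 1),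
          (-1 : R) ^ (i + 1) * ES s f (i + 1) * x ^ (s.card - i)
        + x ^ (s.card + 1)
        = x * ∑ r ∈ Finset.range (s.card + 1), (-1) ^ r * ES s f r * x ^ (s.card - r) := by
      have hx : ∀ r ∈ Finset.range (s.card + 1),
          x * ((-1 : R) ^ r * ES s f r * x ^ (s.card - r))
            = (-1) ^ r * ES s f r * x ^ (s.card + 1 - r) := by
        intro r hr
        have hr' : r ≤ s.card := by simpa [Nat.lt_succ_iff] using hr
        have : s.card + 1 - r = (s.card - r) + 1 := by omega
        rw [this, pow_succ]
        ring
      rw [Finset.mul_sum, Finset.sum_congr rfl hx,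
        Finset.sum_range_succ' (fun r => (-1 : R) ^ r * ES s f r * x ^ (s.card + 1 - r)),
        Finset.sum_range_succ (fun i => (-1 : R) ^ (i + 1) * ES s f (i + 1) * x ^ (s.card - i))]
      rw [ES_of_card_lt f (by omega : s.card < s.card + 1)]
      have hpt : ∀ i ∈ Finset.range s.card,
          (-1 : R) ^ (i + 1) * ES s f (i + 1) * x ^ (s.card - i)
            = (-1) ^ (i + 1) * ES s f (i + 1) * x ^ (s.card + 1 - (i + 1)) := by
        intro i hi
        congr 2
        omega
      rw [Finset.sum_congr rfl hpt]
      simp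
    linear_combination -hfirst

end CoulombAux

/-- The elementary symmetric polynomial `e_r` of a family of ring elements. -/
def esymmF {R : Type*} [CommRing R] {m : ℕ} (f : Fin m → R) (r : ℕ) : R :=
  ∑ t ∈ Finset.powersetCard r Finset.univ, ∏ j ∈ t, f j

variable (k n : ℕ)

/-- The ambient polynomial ring `ℤ[q, z_1,…,z_k, ζ_1,…,ζ_n]`. -/
abbrev QZZeta (k n : ℕ) := MvPolynomial (Unit ⊕ Fin k ⊕ Fin n) ℤ

/-- The quantum variable `q`. -/
def qv (k n : ℕ) : QZZeta k n := X (Sum.inl ())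

/-- The variable `z_i`. -/
def zv (k n : ℕ) (i : Fin k) : QZZeta k n := X (Sum.inr (Sum.inl i))

/-- The variable `ζ_j`. -/
def zetav (k n : ℕ) (j : Fin n) : QZZeta k n := X (Sum.inr (Sum.inr j))

/-- `e_r(z)`. -/
def eZ (r : ℕ) : QZZeta k n := esymmF (zv k n) r

/-- `e_r(ζ)`. -/
def eZeta (r : ℕ) : QZZeta k n := esymmF (zetav k n) r

/-- The truncation `c^z_{≥j} = Σ_{i=j}^{k} (-1)^{i-j} e_i(z)`. -/
def cGeZ (j : ℕ) : QZZeta k n := ∑ i ∈ Finset.Icc j k, (-1) ^ (i - j) * eZ k n i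

/-- The truncation `c^ζ_{≥j} = Σ_{i=j}^{n} (-1)^{i-j} e_i(ζ)`. -/
def cGeZeta (j : ℕ) : QZZeta k n := ∑ i ∈ Finset.Icc j n, (-1) ^ (i - j) * eZeta k n i

/-- `c^ζ = Σ_{i=0}^{n} (-1)^i e_i(ζ) = Π_{i=1}^{n} (1 − ζ_i)`. -/
def cZeta : QZZeta k n := ∑ i ∈ Finset.range (n + 1), (-1) ^ i * eZeta k n i

/-- `c'_{≥ℓ}(z,ζ) = e_ℓ(ζ) + Σ_{m=1}^{k-1} e_{ℓ-m}(ζ) c^z_{≥ m+1}`,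
with the convention `e_s(ζ) = 0` for `s < 0` (i.e. for `m > ℓ`). -/
def cPrimeGe (ℓ : ℕ) : QZZeta k n :=
  eZeta k n ℓ + ∑ m ∈ Finset.Icc 1 (k - 1),
    (if m ≤ ℓ then eZeta k n (ℓ - m) * cGeZ k n (m + 1) else 0)

/-- The `k × k` lower-triangular matrix `E` with `E_{ij} = −e_{i−j}(z)` for `i ≥ j`
and `E_{ij} = 0` for `i < j` (`1`-based indices). -/
def EMat (i j : ℕ) : QZZeta k n := if j ≤ i then -(eZ k n (i - j)) else 0

/-- The `k`-component column vector `C^ζ_{≥n-k+2}`: the `i`-th entry is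
`c^ζ_{≥ n-k+1+i}` for `1 ≤ i ≤ k−1`, and the `k`-th entry is `0`. -/
def CVec (i : ℕ) : QZZeta k n := if i < k then cGeZeta k n (n - k + 1 + i) else 0

/-- The `r`-th component of the product column vector `E·C^ζ_{≥n-k+2}`. -/
def ECVec (r : ℕ) : QZZeta k n := ∑ j ∈ Finset.Icc 1 k, EMat k n r j * CVec k n j

/-- `ĝ_ℓ(z,ζ,q)`: equal to `c'_{≥ℓ}(z,ζ)` for `1 ≤ ℓ ≤ n−k`, and to
`c'_{≥ℓ}(z,ζ) + (E·C^ζ_{≥n-k+2})_{ℓ−n+k} + (-1)^{n+k} q·binom(k−1,n−ℓ)·c^ζ`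
for `n−k+1 ≤ ℓ ≤ n`. -/
def ghat (ℓ : ℕ) : QZZeta k n :=
  if ℓ ≤ n - k then cPrimeGe k n ℓ
  else cPrimeGe k n ℓ + ECVec k n (ℓ + k - n)
    + (-1) ^ (n + k) * qv k n * (Nat.choose (k - 1) (n - ℓ) : QZZeta k n) * cZeta k n

namespace CoulombAux

def s0 (k : ℕ) : Finset (Fin k) := Finset.univ.filter (fun b => 0 < b.val)
def ep (r : ℕ) : QZZeta k n := ES (s0 k) (zv k n) r
def aa (i : ℕ) : QZZeta k n := (-1) ^ i * ep k n i
def bb (r : ℕ) : QZZeta k n := (-1) ^ r * eZeta k n r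
def AA (m : ℕ) : QZZeta k n := ∑ i ∈ Finset.Ico m k, aa k n i
def DD (j : ℕ) : QZZeta k n := ∑ r ∈ Finset.Icc j n, bb k n r
def FF (x : QZZeta k n) (s : ℕ) : QZZeta k n :=
  ∑ r ∈ Finset.range (s + 1), bb k n r * x ^ (s - r)

lemma s0_eq (hk : 1 ≤ k) : s0 k = Finset.univ.erase ⟨0, hk⟩ := by
  ext b
  simp only [s0, Finset.mem_filter, Finset.mem_univ, true_and, Finset.mem_erase, Ne,
    Fin.ext_iff, and_true]
  omega

lemma card_s0 (hk : 1 ≤ k) : (s0 k).card = k - 1 := by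
  rw [s0_eq k hk, Finset.card_erase_of_mem (Finset.mem_univ _), Finset.card_univ,
    Fintype.card_fin]

lemma univ_eq (hk : 1 ≤ k) : (Finset.univ : Finset (Fin k)) = insert ⟨0, hk⟩ (s0 k) := by
  rw [s0_eq k hk, Finset.insert_erase (Finset.mem_univ _)]

lemma ep_zero : ep k n 0 = 1 := ES_zero _ _

lemma ep_top (hk : 1 ≤ k) {r : ℕ} (h : k ≤ r) : ep k n r = 0 :=
  ES_of_card_lt _ (by rw [card_s0 k hk]; omega)

lemma aa_zero : aa k n 0 = 1 := by simp [aa, ep_zero]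

lemma aa_top (hk : 1 ≤ k) {i : ℕ} (h : k ≤ i) : aa k n i = 0 := by
  simp [aa, ep_top k n hk h]

lemma eZ_es (r : ℕ) : eZ k n r = ES Finset.univ (zv k n) r := rfl

lemma eZeta_es (r : ℕ) : eZeta k n r = ES Finset.univ (zetav k n) r := rfl

lemma eZ_zero : eZ k n 0 = 1 := ES_zero _ _

lemma eZ_succ (hk : 1 ≤ k) (r : ℕ) :
    eZ k n (r + 1) = ep k n (r + 1) + zv k n ⟨0, hk⟩ * ep k n r := by
  rw [eZ_es, univ_eq k hk, ES_insert (by rw [s0_eq k hk]; exact Finset.notMem_erase _ _)]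
  rfl

lemma eZeta_top {r : ℕ} (h : n < r) : eZeta k n r = 0 :=
  ES_of_card_lt _ (by rwa [Finset.card_univ, Fintype.card_fin])

lemma eZeta_eq_bb (r : ℕ) : eZeta k n r = (-1) ^ r * bb k n r :=
  (neg_one_cancel r _).symm

lemma ep_eq_aa (r : ℕ) : ep k n r = (-1) ^ r * aa k n r :=
  (neg_one_cancel r _).symm

lemma eZeta_zero : eZeta k n 0 = 1 := ES_zero _ _

lemma bb_zero : bb k n 0 = 1 := by simp [bb, eZeta_zero]

lemma AA_top {m : ℕ} (h : k ≤ m) : AA k n m = 0 := by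
  rw [AA, Finset.Ico_eq_empty (by omega), Finset.sum_empty]

lemma FF_succ (x : QZZeta k n) (s : ℕ) :
    FF k n x (s + 1) = x * FF k n x s + bb k n (s + 1) := by
  rw [FF, FF, Finset.sum_range_succ]
  have h0 : s + 1 - (s + 1) = 0 := by omega
  rw [h0, pow_zero, mul_one]
  congr 1
  rw [Finset.mul_sum]
  refine Finset.sum_congr rfl fun r hr => ?_
  have hr' : r ≤ s := by simpa [Nat.lt_succ_iff] using hr
  have h1 : s + 1 - r = (s - r) + 1 := by omega
  rw [h1, pow_succ]
  ring

lemma cGeZ_eq (hk : 1 ≤ k) (m : ℕ) :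
    cGeZ k n (m + 1)
      = (-1) ^ (m + 1) * (AA k n (m + 1) - zv k n ⟨0, hk⟩ * AA k n m) := by
  have h1 : cGeZ k n (m + 1)
      = (-1) ^ (m + 1) * ∑ i ∈ Finset.Icc (m + 1) k, (-1) ^ i * eZ k n i := by
    rw [cGeZ, Finset.mul_sum]
    refine Finset.sum_congr rfl fun i hi => ?_
    have him : m + 1 ≤ i := (Finset.mem_Icc.mp hi).1
    rw [← mul_assoc, ← pow_add]
    congr 1
    exact neg_one_pow_congr (by omega)
  rw [h1]
  congr 1
  rw [sum_Icc_shift _ m k hk]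
  have h2 : ∀ j ∈ Finset.Icc m (k - 1),
      (-1 : QZZeta k n) ^ (j + 1) * eZ k n (j + 1)
        = aa k n (j + 1) - zv k n ⟨0, hk⟩ * aa k n j := by
    intro j hj
    rw [eZ_succ k n hk j, aa, aa, pow_succ]
    ring
  rw [Finset.sum_congr rfl h2, Finset.sum_sub_distrib]
  congr 1
  · rw [AA, ← sum_Icc_shift (aa k n) m k hk]
    rw [sum_Icc_drop_top (aa k n) (m + 1) k (aa_top k n hk le_rfl)]
  · rw [← Finset.mul_sum]
    congr 1
    rw [AA]
    congr 1
    rw [← Finset.Ico_add_one_right_eq_Icc]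
    congr 1
    omega

lemma cGeZeta_eq (j : ℕ) : cGeZeta k n j = (-1) ^ j * DD k n j := by
  rw [cGeZeta, DD, Finset.mul_sum]
  refine Finset.sum_congr rfl fun i hi => ?_
  have hij : j ≤ i := (Finset.mem_Icc.mp hi).1
  rw [bb, ← mul_assoc, ← pow_add]
  congr 1
  exact neg_one_pow_congr (by omega)

lemma cPrime_eq (hk : 1 ≤ k) (ℓ : ℕ) :
    cPrimeGe k n ℓ
      = (-1) ^ ℓ * (bb k n ℓ - ∑ m ∈ Finset.Icc 1 (k - 1),
          (if m ≤ ℓ then bb k n (ℓ - m) else 0)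
            * (AA k n (m + 1) - zv k n ⟨0, hk⟩ * AA k n m)) := by
  rw [cPrimeGe, eZeta_eq_bb k n ℓ, mul_sub, Finset.mul_sum]
  rw [sub_eq_add_neg, ← Finset.sum_neg_distrib]
  congr 1
  refine Finset.sum_congr rfl fun m hm => ?_
  split_ifs with h
  · rw [eZeta_eq_bb, cGeZ_eq k n hk m]
    have hs : ((-1 : QZZeta k n)) ^ (ℓ - m) * (-1) ^ (m + 1) = -(-1) ^ ℓ := by
      rw [← pow_add]
      have h2 := neg_one_pow_congr (R := QZZeta k n) (a := ℓ - m + (m + 1)) (b := ℓ + 1)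
        (by omega)
      rw [h2, pow_succ]
      ring
    linear_combination (bb k n (ℓ - m)
      * (AA k n (m + 1) - zv k n ⟨0, hk⟩ * AA k n m)) * hs
  · simp

lemma ECVec_eq (hk : 1 ≤ k) (hkn : k ≤ n) {ℓ : ℕ} (h1 : n - k + 1 ≤ ℓ) (h2 : ℓ ≤ n) :
    ECVec k n (ℓ + k - n)
      = (-1) ^ ℓ * ∑ m ∈ Finset.Icc 1 (k - 1),
          ((if n ≤ ℓ + m then aa k n (ℓ + m - n) else 0)
            - zv k n ⟨0, hk⟩ * (if n + 1 ≤ ℓ + m then aa k n (ℓ + m - n - 1) else 0))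
            * DD k n (n + 1 - m) := by
  rw [ECVec, Finset.mul_sum]
  have hdrop : ∑ j ∈ Finset.Icc 1 k, EMat k n (ℓ + k - n) j * CVec k n j
      = ∑ j ∈ Finset.Icc 1 (k - 1), EMat k n (ℓ + k - n) j * CVec k n j := by
    refine (Finset.sum_subset (Finset.Icc_subset_Icc_right (by omega)) fun x hx1 hx2 => ?_).symm
    have hb1 := Finset.mem_Icc.mp hx1
    have hxk : x = k := by
      have : ¬(1 ≤ x ∧ x ≤ k - 1) := fun h => hx2 (Finset.mem_Icc.mpr h)
      omega
    subst hxk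
    rw [CVec, if_neg (by omega), mul_zero]
  rw [hdrop]
  refine Finset.sum_nbij' (fun j => k - j) (fun m => k - m) ?_ ?_ ?_ ?_ ?_
  · intro j hj; simp only [Finset.mem_Icc] at *; omega
  · intro m hm; simp only [Finset.mem_Icc] at *; omega
  · intro j hj; simp only [Finset.mem_Icc] at hj; omega
  · intro m hm; simp only [Finset.mem_Icc] at hm; omega
  · intro j hj
    simp only [Finset.mem_Icc] at hj
    rw [EMat, CVec, if_pos (show j < k by omega), cGeZeta_eq]
    by_cases hc : n ≤ ℓ + (k - j)
    · rw [if_pos (show j ≤ ℓ + k - n by omega), if_pos hc]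
      by_cases hd : n + 1 ≤ ℓ + (k - j)
      · rw [if_pos hd]
        rw [show ℓ + k - n - j = (ℓ + k - n - j - 1) + 1 by omega, eZ_succ k n hk]
        rw [show ℓ + (k - j) - n - 1 = ℓ + k - n - j - 1 by omega]
        rw [show ℓ + (k - j) - n = (ℓ + k - n - j - 1) + 1 by omega]
        rw [show n - k + 1 + j = n + 1 - (k - j) by omega]
        rw [aa, aa]
        set s1 : ℕ := ℓ + k - n - j - 1 with hs1def
        have hA : ((-1 : QZZeta k n)) ^ ℓ * (-1) ^ (s1 + 1)
            = -(-1) ^ (n + 1 - (k - j)) := by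
          rw [← pow_add]
          have h2 := neg_one_pow_congr (R := QZZeta k n)
            (a := ℓ + (s1 + 1)) (b := (n + 1 - (k - j)) + 1) (by omega)
          rw [h2, pow_succ]
          ring
        have hB : ((-1 : QZZeta k n)) ^ ℓ * (-1) ^ s1 = (-1) ^ (n + 1 - (k - j)) := by
          rw [← pow_add]
          exact neg_one_pow_congr (by omega)
        linear_combination (- (ep k n (s1 + 1) * DD k n (n + 1 - (k - j)))) * hA
          + (zv k n ⟨0, hk⟩ * ep k n s1 * DD k n (n + 1 - (k - j))) * hB
      · rw [if_neg hd]
        have h0 : ℓ + k - n - j = 0 := by omega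
        rw [h0, eZ_zero]
        rw [show ℓ + (k - j) - n = 0 by omega, aa_zero]
        rw [show n - k + 1 + j = n + 1 - (k - j) by omega]
        have hA : ((-1 : QZZeta k n)) ^ (n + 1 - (k - j)) = -(-1) ^ ℓ := by
          have h2 := neg_one_pow_congr (R := QZZeta k n)
            (a := n + 1 - (k - j)) (b := ℓ + 1) (by omega)
          rw [h2, pow_succ]
          ring
        rw [hA]
        ring
    · rw [if_neg (show ¬ j ≤ ℓ + k - n by omega), if_neg hc,
        if_neg (show ¬ n + 1 ≤ ℓ + (k - j) by omega)]
      simp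


section MainLemmas

variable (hk : 1 ≤ k) (hkn : k ≤ n)

lemma hsum1 (hk : 1 ≤ k) (hkn : k ≤ n) :
    ∑ ℓ ∈ Finset.Icc 1 n, zv k n ⟨0, hk⟩ ^ (n - ℓ) * bb k n ℓ
      = FF k n (zv k n ⟨0, hk⟩) n - zv k n ⟨0, hk⟩ ^ n := by
  set x := zv k n ⟨0, hk⟩
  have hFF : FF k n x n = x ^ n + ∑ ℓ ∈ Finset.Icc 1 n, x ^ (n - ℓ) * bb k n ℓ := by
    rw [FF]
    have hr : Finset.range (n + 1) = insert 0 (Finset.Icc 1 n) := by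
      ext i
      simp only [Finset.mem_range, Finset.mem_insert, Finset.mem_Icc]
      omega
    rw [hr, Finset.sum_insert (by simp)]
    rw [bb_zero, Nat.sub_zero, one_mul]
    congr 1
    exact Finset.sum_congr rfl fun ℓ _ => mul_comm _ _
  rw [hFF]
  ring

lemma hsum2 (hk : 1 ≤ k) (hkn : k ≤ n) :
    ∑ ℓ ∈ Finset.Icc 1 n, ∑ m ∈ Finset.Icc 1 (k - 1),
        zv k n ⟨0, hk⟩ ^ (n - ℓ) * ((if m ≤ ℓ then bb k n (ℓ - m) else 0)
          * (AA k n (m + 1) - zv k n ⟨0, hk⟩ * AA k n m))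
      = ∑ m ∈ Finset.Icc 1 (k - 1),
          (AA k n (m + 1) - zv k n ⟨0, hk⟩ * AA k n m) * FF k n (zv k n ⟨0, hk⟩) (n - m) := by
  set x := zv k n ⟨0, hk⟩ with hxdef
  rw [Finset.sum_comm]
  refine Finset.sum_congr rfl fun m hm => ?_
  obtain ⟨hm1, hm2⟩ := Finset.mem_Icc.mp hm
  have hmn : m ≤ n - 1 := by omega
  have step1 : ∑ ℓ ∈ Finset.Icc 1 n,
      x ^ (n - ℓ) * ((if m ≤ ℓ then bb k n (ℓ - m) else 0)
        * (AA k n (m + 1) - x * AA k n m))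
      = ∑ ℓ ∈ Finset.Icc m n,
      x ^ (n - ℓ) * ((if m ≤ ℓ then bb k n (ℓ - m) else 0)
        * (AA k n (m + 1) - x * AA k n m)) := by
    refine (Finset.sum_subset (Finset.Icc_subset_Icc_left hm1) fun ℓ hℓ hnℓ => ?_).symm
    have h1 := Finset.mem_Icc.mp hℓ
    have h2 : ¬(m ≤ ℓ ∧ ℓ ≤ n) := fun h => hnℓ (Finset.mem_Icc.mpr h)
    rw [if_neg (by omega), zero_mul, mul_zero]
  rw [step1]
  have step2 : ∀ ℓ ∈ Finset.Icc m n,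
      x ^ (n - ℓ) * ((if m ≤ ℓ then bb k n (ℓ - m) else 0)
        * (AA k n (m + 1) - x * AA k n m))
      = (AA k n (m + 1) - x * AA k n m) * (bb k n (ℓ - m) * x ^ ((n - m) - (ℓ - m))) := by
    intro ℓ hℓ
    obtain ⟨hl1, hl2⟩ := Finset.mem_Icc.mp hℓ
    rw [if_pos hl1, show (n - m) - (ℓ - m) = n - ℓ by omega]
    ring
  rw [Finset.sum_congr rfl step2, ← Finset.mul_sum]
  congr 1
  rw [FF]
  refine Finset.sum_nbij' (fun ℓ => ℓ - m) (fun r => r + m) ?_ ?_ ?_ ?_ ?_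
  · intro ℓ hℓ; simp only [Finset.mem_Icc, Finset.mem_range] at *; omega
  · intro r hr; simp only [Finset.mem_Icc, Finset.mem_range] at *; omega
  · intro ℓ hℓ; simp only [Finset.mem_Icc] at hℓ; omega
  · intro r hr; simp only [Finset.mem_range] at hr; omega
  · intro ℓ hℓ; rfl

lemma htel (hk : 1 ≤ k) (hkn : k ≤ n) :
    ∑ m ∈ Finset.Icc 1 (k - 1),
        (AA k n (m + 1) - zv k n ⟨0, hk⟩ * AA k n m) * FF k n (zv k n ⟨0, hk⟩) (n - m)
      = -(AA k n 1 * FF k n (zv k n ⟨0, hk⟩) n)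
        + ∑ m ∈ Finset.Icc 1 (k - 1), AA k n m * bb k n (n - m + 1) := by
  set x := zv k n ⟨0, hk⟩ with hxdef
  have hpt : ∀ m ∈ Finset.Icc 1 (k - 1),
      (AA k n (m + 1) - x * AA k n m) * FF k n x (n - m)
        = (AA k n (m + 1) * FF k n x (n - m) - AA k n m * FF k n x (n - m + 1))
          + AA k n m * bb k n (n - m + 1) := by
    intro m hm
    linear_combination (AA k n m) * FF_succ k n x (n - m)
  rw [Finset.sum_congr rfl hpt, Finset.sum_add_distrib]
  congr 1
  have hre : ∑ m ∈ Finset.Icc 1 (k - 1),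
      (AA k n (m + 1) * FF k n x (n - m) - AA k n m * FF k n x (n - m + 1))
      = ∑ i ∈ Finset.range (k - 1),
          (AA k n (i + 1 + 1) * FF k n x (n - (i + 1)) - AA k n (i + 1) * FF k n x (n - i)) := by
    refine Finset.sum_nbij' (fun m => m - 1) (fun i => i + 1) ?_ ?_ ?_ ?_ ?_
    · intro m hm; simp only [Finset.mem_Icc, Finset.mem_range] at *; omega
    · intro i hi; simp only [Finset.mem_Icc, Finset.mem_range] at *; omega
    · intro m hm; simp only [Finset.mem_Icc] at hm; omega
    · intro i hi; omega
    · intro m hm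
      simp only [Finset.mem_Icc] at hm
      rw [show m - 1 + 1 = m by omega, show n - (m - 1) = n - m + 1 by omega]
  rw [hre, Finset.sum_range_sub (fun i => AA k n (i + 1) * FF k n x (n - i)) (k - 1)]
  rw [show k - 1 + 1 = k by omega, AA_top k n le_rfl, Nat.sub_zero]
  ring

lemma hP1 (hk : 1 ≤ k) (hkn : k ≤ n) :
    ∑ ℓ ∈ Finset.Icc 1 n, (-1) ^ ℓ * zv k n ⟨0, hk⟩ ^ (n - ℓ) * cPrimeGe k n ℓ
      = FF k n (zv k n ⟨0, hk⟩) n - zv k n ⟨0, hk⟩ ^ n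
        + AA k n 1 * FF k n (zv k n ⟨0, hk⟩) n
        - ∑ m ∈ Finset.Icc 1 (k - 1), AA k n m * bb k n (n - m + 1) := by
  set x := zv k n ⟨0, hk⟩ with hxdef
  have hP1a : ∀ ℓ ∈ Finset.Icc 1 n,
      (-1 : QZZeta k n) ^ ℓ * x ^ (n - ℓ) * cPrimeGe k n ℓ
        = x ^ (n - ℓ) * bb k n ℓ - ∑ m ∈ Finset.Icc 1 (k - 1),
            x ^ (n - ℓ) * ((if m ≤ ℓ then bb k n (ℓ - m) else 0)
              * (AA k n (m + 1) - x * AA k n m)) := by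
    intro ℓ hℓ
    rw [cPrime_eq k n hk ℓ]
    have hcan : ∀ W : QZZeta k n,
        (-1 : QZZeta k n) ^ ℓ * x ^ (n - ℓ) * ((-1) ^ ℓ * W) = x ^ (n - ℓ) * W := by
      intro W
      calc (-1 : QZZeta k n) ^ ℓ * x ^ (n - ℓ) * ((-1) ^ ℓ * W)
          = x ^ (n - ℓ) * ((-1 : QZZeta k n) ^ ℓ * ((-1) ^ ℓ * W)) := by ring
        _ = x ^ (n - ℓ) * W := by rw [neg_one_cancel]
    rw [hcan, mul_sub, Finset.mul_sum]
  rw [Finset.sum_congr rfl hP1a, Finset.sum_sub_distrib, hsum1 k n hk hkn,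
    hsum2 k n hk hkn, htel k n hk hkn]
  ring

lemma hP2 (hk : 1 ≤ k) (hkn : k ≤ n) :
    ∑ ℓ ∈ Finset.Icc (n - k + 1) n, (-1) ^ ℓ * zv k n ⟨0, hk⟩ ^ (n - ℓ) * ECVec k n (ℓ + k - n)
      = ∑ m ∈ Finset.Icc 1 (k - 1), aa k n m * DD k n (n + 1 - m) := by
  set x := zv k n ⟨0, hk⟩ with hxdef
  have hpt : ∀ ℓ ∈ Finset.Icc (n - k + 1) n,
      (-1 : QZZeta k n) ^ ℓ * x ^ (n - ℓ) * ECVec k n (ℓ + k - n)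
        = ∑ m ∈ Finset.Icc 1 (k - 1),
            (x ^ (n - ℓ) * ((if n ≤ ℓ + m then aa k n (ℓ + m - n) else 0)
              - x * (if n + 1 ≤ ℓ + m then aa k n (ℓ + m - n - 1) else 0)))
              * DD k n (n + 1 - m) := by
    intro ℓ hℓ
    obtain ⟨hl1, hl2⟩ := Finset.mem_Icc.mp hℓ
    rw [ECVec_eq k n hk hkn hl1 hl2]
    have hcan : ∀ W : QZZeta k n,
        (-1 : QZZeta k n) ^ ℓ * x ^ (n - ℓ) * ((-1) ^ ℓ * W) = x ^ (n - ℓ) * W := by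
      intro W
      calc (-1 : QZZeta k n) ^ ℓ * x ^ (n - ℓ) * ((-1) ^ ℓ * W)
          = x ^ (n - ℓ) * ((-1 : QZZeta k n) ^ ℓ * ((-1) ^ ℓ * W)) := by ring
        _ = x ^ (n - ℓ) * W := by rw [neg_one_cancel]
    rw [hcan, Finset.mul_sum]
    exact Finset.sum_congr rfl fun m hm => by ring
  rw [Finset.sum_congr rfl hpt, Finset.sum_comm]
  refine Finset.sum_congr rfl fun m hm => ?_
  obtain ⟨hm1, hm2⟩ := Finset.mem_Icc.mp hm
  rw [← Finset.sum_mul]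
  congr 1
  have hre : ∑ ℓ ∈ Finset.Icc (n - k + 1) n,
      x ^ (n - ℓ) * ((if n ≤ ℓ + m then aa k n (ℓ + m - n) else 0)
        - x * (if n + 1 ≤ ℓ + m then aa k n (ℓ + m - n - 1) else 0))
      = ∑ t ∈ Finset.range k,
          (x ^ t * (if t ≤ m then aa k n (m - t) else 0)
            - x ^ (t + 1) * (if t + 1 ≤ m then aa k n (m - (t + 1)) else 0)) := by
    refine Finset.sum_nbij' (fun ℓ => n - ℓ) (fun t => n - t) ?_ ?_ ?_ ?_ ?_
    · intro ℓ hℓ; simp only [Finset.mem_Icc, Finset.mem_range] at *; omega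
    · intro t ht; simp only [Finset.mem_Icc, Finset.mem_range] at *; omega
    · intro ℓ hℓ; simp only [Finset.mem_Icc] at hℓ; omega
    · intro t ht; simp only [Finset.mem_range] at ht; omega
    · intro ℓ hℓ
      simp only [Finset.mem_Icc] at hℓ
      by_cases hd : n + 1 ≤ ℓ + m
      · rw [if_pos (show n ≤ ℓ + m by omega), if_pos hd,
          if_pos (show n - ℓ ≤ m by omega), if_pos (show n - ℓ + 1 ≤ m by omega),
          show m - (n - ℓ) = ℓ + m - n by omega,
          show m - (n - ℓ + 1) = ℓ + m - n - 1 by omega, pow_succ]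
        ring
      · by_cases hc : n ≤ ℓ + m
        · rw [if_pos hc, if_neg hd, if_pos (show n - ℓ ≤ m by omega),
            if_neg (show ¬ (n - ℓ + 1 ≤ m) by omega),
            show m - (n - ℓ) = ℓ + m - n by omega]
          ring
        · rw [if_neg hc, if_neg hd, if_neg (show ¬ (n - ℓ ≤ m) by omega),
            if_neg (show ¬ (n - ℓ + 1 ≤ m) by omega)]
          ring
  rw [hre, Finset.sum_range_sub'
    (fun t => x ^ t * (if t ≤ m then aa k n (m - t) else 0)) k]
  rw [if_pos (Nat.zero_le m), if_neg (by omega : ¬ k ≤ m)]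
  simp

lemma hG5 (hk : 1 ≤ k) (hkn : k ≤ n) :
    ∑ m ∈ Finset.Icc 1 (k - 1), aa k n m * DD k n (n + 1 - m)
      = ∑ m ∈ Finset.Icc 1 (k - 1), AA k n m * bb k n (n - m + 1) := by
  have h1 : ∀ m ∈ Finset.Icc 1 (k - 1),
      aa k n m * DD k n (n + 1 - m)
        = ∑ j ∈ Finset.Icc 1 (k - 1), (if j ≤ m then aa k n m * bb k n (n + 1 - j) else 0) := by
    intro m hm
    obtain ⟨hm1, hm2⟩ := Finset.mem_Icc.mp hm
    rw [DD, Finset.mul_sum]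
    have hre : ∑ r ∈ Finset.Icc (n + 1 - m) n, aa k n m * bb k n r
        = ∑ j ∈ Finset.Icc 1 m, aa k n m * bb k n (n + 1 - j) := by
      refine Finset.sum_nbij' (fun r => n + 1 - r) (fun j => n + 1 - j) ?_ ?_ ?_ ?_ ?_
      · intro r hr; simp only [Finset.mem_Icc] at *; omega
      · intro j hj; simp only [Finset.mem_Icc] at *; omega
      · intro r hr; simp only [Finset.mem_Icc] at hr; omega
      · intro j hj; simp only [Finset.mem_Icc] at hj; omega
      · intro r hr
        simp only [Finset.mem_Icc] at hr
        rw [show n + 1 - (n + 1 - r) = r by omega]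
    rw [hre]
    have e1 : ∑ j ∈ Finset.Icc 1 (k - 1), (if j ≤ m then aa k n m * bb k n (n + 1 - j) else 0)
        = ∑ j ∈ Finset.Icc 1 m, (if j ≤ m then aa k n m * bb k n (n + 1 - j) else 0) := by
      refine (Finset.sum_subset (Finset.Icc_subset_Icc_right hm2) fun j hj hnj => ?_).symm
      have h2 := Finset.mem_Icc.mp hj
      have h3 : ¬(1 ≤ j ∧ j ≤ m) := fun h => hnj (Finset.mem_Icc.mpr h)
      rw [if_neg (by omega)]
    rw [e1]
    exact (Finset.sum_congr rfl fun j hj => if_pos (Finset.mem_Icc.mp hj).2).symm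
  rw [Finset.sum_congr rfl h1, Finset.sum_comm]
  refine Finset.sum_congr rfl fun j hj => ?_
  obtain ⟨hj1, hj2⟩ := Finset.mem_Icc.mp hj
  have e2 : ∑ m ∈ Finset.Icc 1 (k - 1), (if j ≤ m then aa k n m * bb k n (n + 1 - j) else 0)
      = ∑ m ∈ Finset.Icc j (k - 1), aa k n m * bb k n (n + 1 - j) := by
    rw [(Finset.sum_subset (Finset.Icc_subset_Icc_left hj1) fun m hm hnm => ?_).symm]
    · exact Finset.sum_congr rfl fun m hm => if_pos (Finset.mem_Icc.mp hm).1
    · have h2 := Finset.mem_Icc.mp hm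
      have h3 : ¬(j ≤ m ∧ m ≤ k - 1) := fun h => hnm (Finset.mem_Icc.mpr h)
      rw [if_neg (by omega)]
  rw [e2, ← Finset.sum_mul]
  have : Finset.Icc j (k - 1) = Finset.Ico j k := by
    rw [← Finset.Ico_add_one_right_eq_Icc]
    congr 1
    omega
  rw [this, ← AA, show n + 1 - j = n - j + 1 by omega]

lemma hqpart (hk : 1 ≤ k) (hkn : k ≤ n) :
    ∑ ℓ ∈ Finset.Icc (n - k + 1) n, (-1) ^ ℓ * zv k n ⟨0, hk⟩ ^ (n - ℓ)
        * ((-1) ^ (n + k) * qv k n * (Nat.choose (k - 1) (n - ℓ) : QZZeta k n) * cZeta k n)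
      = (-1) ^ k * qv k n * (1 - zv k n ⟨0, hk⟩) ^ (k - 1) * cZeta k n := by
  set x := zv k n ⟨0, hk⟩ with hxdef
  have hre : ∑ ℓ ∈ Finset.Icc (n - k + 1) n, (-1 : QZZeta k n) ^ ℓ * x ^ (n - ℓ)
        * ((-1) ^ (n + k) * qv k n * (Nat.choose (k - 1) (n - ℓ) : QZZeta k n) * cZeta k n)
      = ∑ t ∈ Finset.range k, (-1 : QZZeta k n) ^ (n - t) * x ^ t
          * ((-1) ^ (n + k) * qv k n * (Nat.choose (k - 1) t : QZZeta k n) * cZeta k n) := by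
    refine Finset.sum_nbij' (fun ℓ => n - ℓ) (fun t => n - t) ?_ ?_ ?_ ?_ ?_
    · intro ℓ hℓ; simp only [Finset.mem_Icc, Finset.mem_range] at *; omega
    · intro t ht; simp only [Finset.mem_Icc, Finset.mem_range] at *; omega
    · intro ℓ hℓ; simp only [Finset.mem_Icc] at hℓ; omega
    · intro t ht; simp only [Finset.mem_range] at ht; omega
    · intro ℓ hℓ
      simp only [Finset.mem_Icc] at hℓ
      rw [show n - (n - ℓ) = ℓ by omega]
  rw [hre]
  have hbin : (1 - x) ^ (k - 1)
      = ∑ t ∈ Finset.range k, (-1 : QZZeta k n) ^ t * x ^ t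
          * (Nat.choose (k - 1) t : QZZeta k n) := by
    have h1 := add_pow (-x) 1 (k - 1)
    rw [show (1 : QZZeta k n) - x = -x + 1 by ring, h1, show k - 1 + 1 = k by omega]
    refine Finset.sum_congr rfl fun t ht => ?_
    rw [neg_pow, one_pow]
    ring
  rw [hbin, Finset.mul_sum, Finset.sum_mul]
  refine Finset.sum_congr rfl fun t ht => ?_
  have ht' : t < k := Finset.mem_range.mp ht
  have hs : ((-1 : QZZeta k n)) ^ (n - t) * (-1) ^ (n + k) = (-1) ^ k * (-1) ^ t := by
    rw [← pow_add, ← pow_add]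
    exact neg_one_pow_congr (by omega)
  linear_combination (zv k n ⟨0, hk⟩ ^ t * (Nat.choose (k - 1) t : QZZeta k n)
    * qv k n * cZeta k n) * hs

lemma hprod1 (hk : 1 ≤ k) :
    ∏ i : Fin n, (zv k n ⟨0, hk⟩ - zetav k n i) = FF k n (zv k n ⟨0, hk⟩) n := by
  rw [prod_sub_eq_sum Finset.univ (zetav k n) (zv k n ⟨0, hk⟩)]
  simp only [Finset.card_univ, Fintype.card_fin]
  rw [FF]
  refine Finset.sum_congr rfl fun r hr => ?_
  rw [bb, eZeta_es]

lemma hprod2 (hk : 1 ≤ k) :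
    ∏ b ∈ Finset.univ.filter (fun b : Fin k => 0 < b.val), (1 - zv k n b)
      = 1 + AA k n 1 := by
  have h0 : Finset.univ.filter (fun b : Fin k => 0 < b.val) = s0 k := rfl
  rw [h0, prod_sub_eq_sum (s0 k) (zv k n) 1, card_s0 k hk, show k - 1 + 1 = k by omega]
  have hpt : ∀ r ∈ Finset.range k,
      (-1 : QZZeta k n) ^ r * ES (s0 k) (zv k n) r * 1 ^ (k - 1 - r) = aa k n r := by
    intro r hr
    rw [one_pow, mul_one]
    rfl
  rw [Finset.sum_congr rfl hpt]
  have hr2 : Finset.range k = insert 0 (Finset.Icc 1 (k - 1)) := by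
    ext i
    simp only [Finset.mem_range, Finset.mem_insert, Finset.mem_Icc]
    omega
  rw [hr2, Finset.sum_insert (by simp), aa_zero, AA, ← Finset.Ico_add_one_right_eq_Icc,
    show k - 1 + 1 = k by omega]

lemma hprod3 : ∏ i : Fin n, (1 - zetav k n i) = cZeta k n := by
  rw [prod_sub_eq_sum Finset.univ (zetav k n) 1]
  simp only [Finset.card_univ, Fintype.card_fin, one_pow, mul_one]
  rw [cZeta]
  exact Finset.sum_congr rfl fun i _ => by rw [eZeta_es]

lemma hreindex (hk : 1 ≤ k) :
    ∑ i ∈ Finset.range n, (-1) ^ (n - i) * zv k n ⟨0, hk⟩ ^ i * ghat k n (n - i)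
      = ∑ ℓ ∈ Finset.Icc 1 n, (-1) ^ ℓ * zv k n ⟨0, hk⟩ ^ (n - ℓ) * ghat k n ℓ := by
  refine Finset.sum_nbij' (fun i => n - i) (fun ℓ => n - ℓ) ?_ ?_ ?_ ?_ ?_
  · intro i hi; simp only [Finset.mem_range, Finset.mem_Icc] at *; omega
  · intro ℓ hℓ; simp only [Finset.mem_range, Finset.mem_Icc] at *; omega
  · intro i hi; simp only [Finset.mem_range] at hi; omega
  · intro ℓ hℓ; simp only [Finset.mem_Icc] at hℓ; omega
  · intro i hi
    simp only [Finset.mem_range] at hi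
    rw [show n - (n - i) = i by omega]

lemma hsplit (hk : 1 ≤ k) (hkn : k ≤ n) :
    ∑ ℓ ∈ Finset.Icc 1 n, (-1) ^ ℓ * zv k n ⟨0, hk⟩ ^ (n - ℓ) * ghat k n ℓ
      = (∑ ℓ ∈ Finset.Icc 1 n, (-1) ^ ℓ * zv k n ⟨0, hk⟩ ^ (n - ℓ) * cPrimeGe k n ℓ)
        + (∑ ℓ ∈ Finset.Icc (n - k + 1) n,
            (-1) ^ ℓ * zv k n ⟨0, hk⟩ ^ (n - ℓ) * ECVec k n (ℓ + k - n))
        + (∑ ℓ ∈ Finset.Icc (n - k + 1) n,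
            (-1) ^ ℓ * zv k n ⟨0, hk⟩ ^ (n - ℓ)
              * ((-1) ^ (n + k) * qv k n * (Nat.choose (k - 1) (n - ℓ) : QZZeta k n)
                  * cZeta k n)) := by
  set x := zv k n ⟨0, hk⟩ with hxdef
  have hI1 : Finset.Icc 1 n = Finset.Ioc 0 n := by
    ext i; simp only [Finset.mem_Icc, Finset.mem_Ioc]; omega
  have hI2 : Finset.Icc (n - k + 1) n = Finset.Ioc (n - k) n := by
    ext i; simp only [Finset.mem_Icc, Finset.mem_Ioc]; omega
  rw [hI1, hI2]
  rw [← Finset.sum_Ioc_consecutive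
    (fun ℓ => (-1 : QZZeta k n) ^ ℓ * x ^ (n - ℓ) * ghat k n ℓ)
    (Nat.zero_le (n - k)) (by omega : n - k ≤ n)]
  rw [← Finset.sum_Ioc_consecutive
    (fun ℓ => (-1 : QZZeta k n) ^ ℓ * x ^ (n - ℓ) * cPrimeGe k n ℓ)
    (Nat.zero_le (n - k)) (by omega : n - k ≤ n)]
  have e1 : ∀ ℓ ∈ Finset.Ioc 0 (n - k),
      (-1 : QZZeta k n) ^ ℓ * x ^ (n - ℓ) * ghat k n ℓ
        = (-1) ^ ℓ * x ^ (n - ℓ) * cPrimeGe k n ℓ := by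
    intro ℓ hℓ
    rw [ghat, if_pos (Finset.mem_Ioc.mp hℓ).2]
  have e2 : ∀ ℓ ∈ Finset.Ioc (n - k) n,
      (-1 : QZZeta k n) ^ ℓ * x ^ (n - ℓ) * ghat k n ℓ
        = (-1) ^ ℓ * x ^ (n - ℓ) * cPrimeGe k n ℓ
          + (-1) ^ ℓ * x ^ (n - ℓ) * ECVec k n (ℓ + k - n)
          + (-1) ^ ℓ * x ^ (n - ℓ)
              * ((-1) ^ (n + k) * qv k n * (Nat.choose (k - 1) (n - ℓ) : QZZeta k n)
                  * cZeta k n) := by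
    intro ℓ hℓ
    have hb := Finset.mem_Ioc.mp hℓ
    rw [ghat, if_neg (by omega)]
    ring
  rw [Finset.sum_congr rfl e1, Finset.sum_congr rfl e2]
  rw [Finset.sum_add_distrib, Finset.sum_add_distrib]
  ring

lemma esymmF_perm {R : Type*} [CommRing R] {m : ℕ} (f : Fin m → R)
    (π : Equiv.Perm (Fin m)) (r : ℕ) :
    esymmF (fun i => f (π i)) r = esymmF f r := by
  rw [esymmF, esymmF]
  refine Finset.sum_nbij' (fun t => t.image π) (fun t => t.image π.symm) ?_ ?_ ?_ ?_ ?_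
  · intro t ht
    simp only [Finset.mem_powersetCard] at *
    exact ⟨Finset.subset_univ _,
      by rw [Finset.card_image_of_injective _ π.injective]; exact ht.2⟩
  · intro t ht
    simp only [Finset.mem_powersetCard] at *
    exact ⟨Finset.subset_univ _,
      by rw [Finset.card_image_of_injective _ π.symm.injective]; exact ht.2⟩
  · intro t ht
    rw [Finset.image_image]
    simp
  · intro t ht
    rw [Finset.image_image]
    simp
  · intro t ht
    exact (Finset.prod_image fun x _ y _ h => π.injective h).symm

section Symmetry

variable {k n : ℕ} (π : Equiv.Perm (Fin k)) (τ : Equiv.Perm (Fin n))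

lemma rename_qv : rename (Sum.map id (Sum.map π τ)) (qv k n) = qv k n := by
  rw [qv, rename_X]
  rfl

lemma rename_eZ (r : ℕ) : rename (Sum.map id (Sum.map π τ)) (eZ k n r) = eZ k n r := by
  rw [eZ, esymmF, map_sum]
  have h1 : ∀ t ∈ Finset.powersetCard r (Finset.univ : Finset (Fin k)),
      rename (Sum.map id (Sum.map π τ)) (∏ j ∈ t, zv k n j) = ∏ j ∈ t, zv k n (π j) := by
    intro t ht
    rw [map_prod]
    exact Finset.prod_congr rfl fun j _ => by rw [zv, rename_X]; rfl
  rw [Finset.sum_congr rfl h1]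
  exact esymmF_perm (zv k n) π r

lemma rename_eZeta (r : ℕ) :
    rename (Sum.map id (Sum.map π τ)) (eZeta k n r) = eZeta k n r := by
  rw [eZeta, esymmF, map_sum]
  have h1 : ∀ t ∈ Finset.powersetCard r (Finset.univ : Finset (Fin n)),
      rename (Sum.map id (Sum.map π τ)) (∏ j ∈ t, zetav k n j) = ∏ j ∈ t, zetav k n (τ j) := by
    intro t ht
    rw [map_prod]
    exact Finset.prod_congr rfl fun j _ => by rw [zetav, rename_X]; rfl
  rw [Finset.sum_congr rfl h1]
  exact esymmF_perm (zetav k n) τ r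

lemma rename_cGeZ (j : ℕ) :
    rename (Sum.map id (Sum.map π τ)) (cGeZ k n j) = cGeZ k n j := by
  rw [cGeZ, map_sum]
  exact Finset.sum_congr rfl fun i _ => by
    rw [map_mul, map_pow, map_neg, map_one, rename_eZ]

lemma rename_cGeZeta (j : ℕ) :
    rename (Sum.map id (Sum.map π τ)) (cGeZeta k n j) = cGeZeta k n j := by
  rw [cGeZeta, map_sum]
  exact Finset.sum_congr rfl fun i _ => by
    rw [map_mul, map_pow, map_neg, map_one, rename_eZeta]

lemma rename_cZeta :
    rename (Sum.map id (Sum.map π τ)) (cZeta k n) = cZeta k n := by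
  rw [cZeta, map_sum]
  exact Finset.sum_congr rfl fun i _ => by
    rw [map_mul, map_pow, map_neg, map_one, rename_eZeta]

lemma rename_cPrimeGe (ℓ : ℕ) :
    rename (Sum.map id (Sum.map π τ)) (cPrimeGe k n ℓ) = cPrimeGe k n ℓ := by
  rw [cPrimeGe, map_add, rename_eZeta, map_sum]
  refine congrArg _ (Finset.sum_congr rfl fun m hm => ?_)
  split_ifs with h
  · rw [map_mul, rename_eZeta, rename_cGeZ]
  · exact map_zero _

lemma rename_EMat (i j : ℕ) :
    rename (Sum.map id (Sum.map π τ)) (EMat k n i j) = EMat k n i j := by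
  rw [EMat]
  split_ifs with h
  · rw [map_neg, rename_eZ]
  · exact map_zero _

lemma rename_CVec (i : ℕ) :
    rename (Sum.map id (Sum.map π τ)) (CVec k n i) = CVec k n i := by
  rw [CVec]
  split_ifs with h
  · exact rename_cGeZeta π τ _
  · exact map_zero _

lemma rename_ECVec (r : ℕ) :
    rename (Sum.map id (Sum.map π τ)) (ECVec k n r) = ECVec k n r := by
  rw [ECVec, map_sum]
  exact Finset.sum_congr rfl fun j _ => by rw [map_mul, rename_EMat, rename_CVec]

lemma rename_ghat (ℓ : ℕ) :
    rename (Sum.map id (Sum.map π τ)) (ghat k n ℓ) = ghat k n ℓ := by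
  rw [ghat]
  split_ifs with h
  · exact rename_cPrimeGe π τ ℓ
  · rw [map_add, map_add, rename_cPrimeGe, rename_ECVec, map_mul, map_mul, map_mul,
      map_pow, map_neg, map_one, rename_qv, map_natCast, rename_cZeta]

end Symmetry

end MainLemmas

end CoulombAux

/-- Symmetrization of the Coulomb branch (Bethe Ansatz) equations: for `n ≥ k ≥ 1`,
`(Π_{i=1}^{n} (z_1 − ζ_i)) (Π_{b=2}^{k} (1 − z_b)) + (-1)^k q (1−z_1)^{k−1} Π_{i=1}^{n} (1 − ζ_i)
 = z_1^n + Σ_{i=0}^{n−1} (-1)^{n−i} z_1^i ĝ_{n−i}(z,ζ,q)`,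
and each `ĝ_ℓ` (`1 ≤ ℓ ≤ n`) is a symmetric polynomial in the `z`-variables and
in the `ζ`-variables. -/
theorem coulomb_symmetrization (n k : ℕ) (hk : 1 ≤ k) (hkn : k ≤ n) :
    ((∏ i : Fin n, (zv k n (⟨0, hk⟩ : Fin k) - zetav k n i))
        * ∏ b ∈ Finset.univ.filter (fun b : Fin k => 0 < b.val), (1 - zv k n b))
      + (-1) ^ k * qv k n * (1 - zv k n (⟨0, hk⟩ : Fin k)) ^ (k - 1)
          * ∏ i : Fin n, (1 - zetav k n i)
      = zv k n (⟨0, hk⟩ : Fin k) ^ n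
        + ∑ i ∈ Finset.range n,
            (-1) ^ (n - i) * zv k n (⟨0, hk⟩ : Fin k) ^ i * ghat k n (n - i)
    ∧ ∀ ℓ, 1 ≤ ℓ → ℓ ≤ n → ∀ (π : Equiv.Perm (Fin k)) (τ : Equiv.Perm (Fin n)),
        MvPolynomial.rename (Sum.map id (Sum.map π τ)) (ghat k n ℓ) = ghat k n ℓ := by
  constructor
  · rw [CoulombAux.hprod1 k n hk, CoulombAux.hprod2 k n hk, CoulombAux.hprod3 k n,
      CoulombAux.hreindex k n hk, CoulombAux.hsplit k n hk hkn,
      CoulombAux.hP1 k n hk hkn, CoulombAux.hP2 k n hk hkn, CoulombAux.hG5 k n hk hkn,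
      CoulombAux.hqpart k n hk hkn]
    ring
  · intro ℓ _ _ π τ
    exact CoulombAux.rename_ghat π τ ℓ

end
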